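/- For every κ ≥ 1 and E ≥ 0, the 4×4 real symmetric matrix σ with 2×2 blocks σ₁₁ = (E + 1/2)·I₂, σ₂₂ = (ηE + 1/2)·I₂, σ₁₂ = σ₂₁ = √(ηE(E+1))·σ_Z (where σ_Z = diag(1,−1)) has symplectic eigenvalues (1−η)E + 1/2 and 1/2 for every η ∈ [0,1]; that is, the eigenvalues of Δ⁻¹σ are ±i((1−η)E + 1/2) and ±i/2, where Δ is the direct sum of two copies of the 2×2 matrix [[0,1],[−1,0]]. -/

import Mathlib

open Polynomial

/-- The 4×4 symplectic form `Δ = J ⊕ J` with `J = [[0,1],[−1,0]]`. -/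
def SymplecticForm : Matrix (Fin 4) (Fin 4) ℝ :=
  !![0, 1, 0, 0; -1, 0, 0, 0; 0, 0, 0, 1; 0, 0, -1, 0]

/-- Covariance matrix of half of a two-mode squeezed vacuum with mean photon
number `E` sent through an attenuator of transmissivity `η`. -/
noncomputable def attCov (E η : ℝ) : Matrix (Fin 4) (Fin 4) ℝ :=
  !![E + 1 / 2, 0, Real.sqrt (η * E * (E + 1)), 0;
     0, E + 1 / 2, 0, -Real.sqrt (η * E * (E + 1));
     Real.sqrt (η * E * (E + 1)), 0, η * E + 1 / 2, 0;
     0, -Real.sqrt (η * E * (E + 1)), 0, η * E + 1 / 2]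

set_option maxHeartbeats 1600000 in
lemma det_fin_four' {R : Type*} [CommRing R] (A : Matrix (Fin 4) (Fin 4) R) :
    A.det = A 0 0 * (A 1 1 * (A 2 2 * A 3 3 - A 2 3 * A 3 2)
                    - A 1 2 * (A 2 1 * A 3 3 - A 2 3 * A 3 1)
                    + A 1 3 * (A 2 1 * A 3 2 - A 2 2 * A 3 1))
      - A 0 1 * (A 1 0 * (A 2 2 * A 3 3 - A 2 3 * A 3 2)
                - A 1 2 * (A 2 0 * A 3 3 - A 2 3 * A 3 0)
                + A 1 3 * (A 2 0 * A 3 2 - A 2 2 * A 3 0))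
      + A 0 2 * (A 1 0 * (A 2 1 * A 3 3 - A 2 3 * A 3 1)
                - A 1 1 * (A 2 0 * A 3 3 - A 2 3 * A 3 0)
                + A 1 3 * (A 2 0 * A 3 1 - A 2 1 * A 3 0))
      - A 0 3 * (A 1 0 * (A 2 1 * A 3 2 - A 2 2 * A 3 1)
                - A 1 1 * (A 2 0 * A 3 2 - A 2 2 * A 3 0)
                + A 1 2 * (A 2 0 * A 3 1 - A 2 1 * A 3 0)) := by
  simp only [Matrix.det_succ_row_zero, ← Nat.not_even_iff_odd, Matrix.submatrix_apply,
    Fin.succ_zero_eq_one, Matrix.submatrix_submatrix, Matrix.det_unique, Fin.default_eq_zero,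
    Function.comp_apply, Fin.succ_one_eq_two, Fin.sum_univ_succ, Fin.val_zero, Fin.zero_succAbove,
    Finset.univ_unique, Fin.val_succ, Fin.val_eq_zero, Fin.succ_succAbove_zero,
    Finset.sum_singleton, Fin.succ_succAbove_one, Even.add_self]
  norm_num [Fin.succAbove, Fin.succ, Fin.castSucc, Fin.castAdd, Fin.castLE, Fin.lt_def]
  simp only [show (⟨3, by omega⟩ : Fin 4) = 3 from rfl, show (⟨2, by omega⟩ : Fin 4) = 2 from rfl,
    show (⟨1, by omega⟩ : Fin 4) = 1 from rfl]
  ring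

/-- for `κ ≥ 1`, `E ≥ 0` and `η ∈ [0,1]`, the eigenvalues of
`Δ⁻¹σ` are `±i((1−η)E + 1/2)` and `±i/2`, i.e. the characteristic polynomial of
`Δ⁻¹σ` (over `ℂ`) factors accordingly; the symplectic eigenvalues of `σ` are
thus `(1−η)E + 1/2` and `1/2`. -/
theorem attCov_symplectic_eigenvalues (κ E η : ℝ) (hκ : 1 ≤ κ) (hE : 0 ≤ E)
    (hη : η ∈ Set.Icc (0 : ℝ) 1) :
    ((SymplecticForm⁻¹ * attCov E η).map (Complex.ofReal ·)).charpoly =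
      (X - C (((1 - η) * E + 1 / 2) * Complex.I)) *
      (X - C (-(((1 - η) * E + 1 / 2) * Complex.I))) *
      (X - C (Complex.I / 2)) * (X - C (-(Complex.I / 2))) := by
  set s := Real.sqrt (η * E * (E + 1)) with hsdef
  have hs : (s : ℂ)^2 = (η : ℂ) * (E : ℂ) * ((E : ℂ) + 1) := by
    rw [← Complex.ofReal_pow, Real.sq_sqrt (mul_nonneg (mul_nonneg hη.1 hE) (by linarith))]
    push_cast; ring
  have hinv : SymplecticForm⁻¹ = !![0,-1,0,0; 1,0,0,0; 0,0,0,-1; 0,0,1,0] := by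
    apply Matrix.inv_eq_right_inv
    ext i j
    fin_cases i <;> fin_cases j <;>
      simp [SymplecticForm, Matrix.mul_apply, Fin.sum_univ_four, Matrix.one_apply,
        Matrix.vecHead, Matrix.vecTail]
  have hM : SymplecticForm⁻¹ * attCov E η =
      !![0, -(E+1/2), 0, s; E+1/2, 0, s, 0; 0, s, 0, -(η*E+1/2); s, 0, η*E+1/2, 0] := by
    rw [hinv]
    ext i j
    fin_cases i <;> fin_cases j <;>
      simp [attCov, Matrix.mul_apply, Fin.sum_univ_four, Matrix.vecHead, Matrix.vecTail]
      <;> ring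
  rw [hM, Matrix.charpoly, det_fin_four']
  simp only [Matrix.charmatrix_apply, Matrix.map_apply, Matrix.one_apply, Matrix.cons_val',
    Matrix.cons_val_zero, Matrix.cons_val_one, Matrix.head_cons, Matrix.empty_val',
    Matrix.cons_val_fin_one, Matrix.vecHead, Matrix.vecTail, Matrix.smul_apply]
  simp (config := { decide := true }) only [Matrix.diagonal_apply]
  norm_num
  simp only [Matrix.cons_val_two, Matrix.cons_val_three, Matrix.vecHead, Matrix.vecTail, Function.comp_apply,
    Fin.succ_zero_eq_one, Matrix.cons_val_one, Matrix.cons_val_zero, Matrix.cons_val_succ]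
  norm_num
  have hI : (Polynomial.C Complex.I)^2 = (-1 : Polynomial ℂ) := by
    rw [← map_pow, Complex.I_sq, map_neg, map_one]
  have hH : (2 : Polynomial ℂ) * Polynomial.C ((1:ℂ)/2) = 1 := by
    rw [show (2 : Polynomial ℂ) = Polynomial.C 2 from (map_ofNat Polynomial.C 2).symm, ← map_mul]; norm_num
  have hS' : (Polynomial.C (s:ℂ))^2
      = Polynomial.C (η:ℂ) * Polynomial.C (E:ℂ) * (Polynomial.C (E:ℂ) + 1) := by
    rw [← map_pow, hs]; simp [map_mul]
  rw [show Polynomial.C (Complex.I/2) = Polynomial.C Complex.I * Polynomial.C ((1:ℂ)/2) by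
    rw [← map_mul]; congr 1; ring]
  set A := Polynomial.C (E:ℂ)
  set B := Polynomial.C (η:ℂ)
  set S := Polynomial.C (s:ℂ)
  set H := Polynomial.C ((1:ℂ)/2)
  set Ii := Polynomial.C Complex.I
  linear_combination
    (-2*X^2 - 2*(A+H)*(B*A+H) + S^2 + B*A*(A+1)) * hS'
    + ((((1-B)*A+H)^2*(X^2+H^2) + H^2*(X^2+((1-B)*A+H)^2)
        - ((1-B)*A+H)^2*H^2*(Ii^2+1)) : Polynomial ℂ) * hI
    + (2*A*B*X^2 + A*B*((A+H)*(B*A+H) - B*A*(A+1) + ((1-B)*A+H)*H)) * hH
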